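/- Let G be a graph containing no cycle of length ≥ 4. Let D₁, …, D_s (s ≥ 2) be disjoint subsets of V(G), and let I be the auxiliary graph on {D₁, …, D_s} with Dⱼ ~ D_k iff some edge of G joins Dⱼ to D_k. Suppose S is a set of edges of G, each with endpoints in distinct sets Dⱼ, such that any three distinct edges of S have at least four distinct endpoints in total. If the auxiliary graph I restricted to edges realized by S contains a cycle, then G contains a cycle of length at least 4 (contradiction); hence such a configuration is impossible. -/

import Mathlib

open SimpleGraph Finset

private lemma my_append_isPath {V : Type*} {G : SimpleGraph V} {u v w : V}
    {p : G.Walk u v} {q : G.Walk v w} (hp : p.IsPath) (hq : q.IsPath)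
    (h : ∀ x, x ∈ p.support → x ∈ q.support → x = v) : (p.append q).IsPath := by
  rw [SimpleGraph.Walk.isPath_def, SimpleGraph.Walk.support_append]
  refine List.Nodup.append hp.support_nodup hq.support_nodup.tail ?_
  intro x hxp hxq
  have hx' : x ∈ q.support := List.mem_of_mem_tail hxq
  have hxv := h x hxp hx'
  subst hxv
  have hnd := hq.support_nodup
  rw [q.support_eq_cons] at hnd
  exact (List.nodup_cons.mp hnd).1 hxq

private lemma my_path_in {V : Type*} [DecidableEq V] {G : SimpleGraph V} (Dset : Finset V)
    (hconn : (G.induce ((Dset : Set V))).Connected) {x u : V} (hx : x ∈ Dset) (hu : u ∈ Dset) :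
    ∃ r : G.Walk x u, r.IsPath ∧ ∀ v ∈ r.support, v ∈ Dset := by
  obtain ⟨w⟩ := hconn ⟨x, hx⟩ ⟨u, hu⟩
  let f : G.induce ((Dset : Set V)) →g G := ⟨Subtype.val, fun h => h⟩
  have hinj : Function.Injective f := Subtype.val_injective
  let p : (G.induce ((Dset : Set V))).Walk ⟨x, hx⟩ ⟨u, hu⟩ := w.toPath
  refine ⟨((p.map f).copy rfl rfl), ?_, ?_⟩
  · rw [SimpleGraph.Walk.isPath_copy]
    exact SimpleGraph.Walk.map_isPath_of_injective hinj (SimpleGraph.Path.isPath _)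
  · intro v hv
    rw [SimpleGraph.Walk.support_copy, SimpleGraph.Walk.support_map] at hv
    obtain ⟨a, _, rfl⟩ := List.mem_map.mp hv
    exact a.2

private lemma my_end_edge {V : Type*} {G : SimpleGraph V} {u v : V} {w : G.Walk u v}
    (hw : w.IsPath) (hl : 2 ≤ w.length) : s(v, u) ∉ w.edges := by
  cases w with
  | nil => simp at hl
  | @cons _ c _ h' w' =>
    intro hmem
    rw [SimpleGraph.Walk.edges_cons] at hmem
    have hu : u ∉ w'.support := (SimpleGraph.Walk.cons_isPath_iff _ _ |>.mp hw).2
    rcases List.mem_cons.mp hmem with heq | hmem'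
    · rw [Sym2.eq_iff] at heq
      rcases heq with ⟨rfl, rfl⟩ | ⟨hvc, _⟩
      · exact hu w'.end_mem_support
      · subst hvc
        have : w' = SimpleGraph.Walk.nil :=
          SimpleGraph.Walk.isPath_iff_eq_nil.mp
            (SimpleGraph.Walk.cons_isPath_iff _ _ |>.mp hw).1
        subst this
        simp at hl
    · exact hu (w'.snd_mem_support_of_mem_edges hmem')

private lemma my_lift {V : Type*} [DecidableEq V] {G : SimpleGraph V} {m : ℕ}
    {D : Fin m → Finset V} {S : Finset (Sym2 V)} {I : SimpleGraph (Fin m)}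
    (hdisj : ∀ j k, j ≠ k → Disjoint (D j) (D k))
    (hreal : ∀ i k, I.Adj i k → ∃ x ∈ D i, ∃ y ∈ D k, s(x, y) ∈ S ∧ G.Adj x y)
    (hpth : ∀ i, ∀ x ∈ D i, ∀ u ∈ D i, ∃ r : G.Walk x u, r.IsPath ∧ ∀ v ∈ r.support, v ∈ D i)
    {a b : Fin m} (q : I.Walk a b) (hq : q.IsPath) :
    ∀ x ∈ D a, ∀ y ∈ D b,
      ∃ w : G.Walk x y, w.IsPath ∧ (∀ v ∈ w.support, ∃ i ∈ q.support, v ∈ D i)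
        ∧ q.length ≤ w.length ∧ (w.length = q.length → ∀ e ∈ w.edges, e ∈ S) := by
  induction q with
  | nil =>
    intro x hx y hy
    obtain ⟨r, hrp, hrs⟩ := hpth _ x hx y hy
    refine ⟨r, hrp, fun v hv => ⟨_, by simp, hrs v hv⟩, by simp, ?_⟩
    intro hlen e he
    have h0 : r.edges.length = 0 := by simp [r.length_edges, hlen]
    rw [List.length_eq_zero_iff.mp h0] at he
    simp at he
  | @cons a a' b h q ih =>
    intro x hx y hy
    rw [SimpleGraph.Walk.cons_isPath_iff] at hq
    obtain ⟨hqp, hanot⟩ := hq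
    obtain ⟨u, hu, v, hv, hSuv, hadj⟩ := hreal a a' h
    obtain ⟨w', hw'p, hw's, hw'len, hw'eq⟩ := ih hqp v hv y hy
    obtain ⟨r, hrp, hrs⟩ := hpth a x hx u hu
    -- every vertex of w' lies in some D i with i ≠ a
    have hw'na : ∀ z ∈ w'.support, z ∉ D a := by
      intro z hz hza
      obtain ⟨i, hi, hzi⟩ := hw's z hz
      have hia : i ≠ a := fun hia => hanot (hia ▸ hi)
      exact (Finset.disjoint_left.mp (hdisj i a hia) hzi) hza
    have hcp : (SimpleGraph.Walk.cons hadj w').IsPath := by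
      rw [SimpleGraph.Walk.cons_isPath_iff]
      exact ⟨hw'p, fun hmem => hw'na u hmem hu⟩
    refine ⟨r.append (SimpleGraph.Walk.cons hadj w'), ?_, ?_, ?_, ?_⟩
    · refine my_append_isPath hrp hcp ?_
      intro z hzr hzc
      rw [SimpleGraph.Walk.support_cons] at hzc
      rcases List.mem_cons.mp hzc with rfl | hzc'
      · rfl
      · exact absurd (hrs z hzr) (hw'na z hzc')
    · intro z hz
      rw [SimpleGraph.Walk.mem_support_append_iff] at hz
      rcases hz with hz | hz
      · exact ⟨a, by simp, hrs z hz⟩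
      · rw [SimpleGraph.Walk.support_cons] at hz
        rcases List.mem_cons.mp hz with rfl | hz'
        · exact ⟨a, by simp, hu⟩
        · obtain ⟨i, hi, hzi⟩ := hw's z hz'
          exact ⟨i, by simp [SimpleGraph.Walk.support_cons, hi], hzi⟩
    · rw [SimpleGraph.Walk.length_append, SimpleGraph.Walk.length_cons,
        SimpleGraph.Walk.length_cons]
      omega
    · rw [SimpleGraph.Walk.length_append, SimpleGraph.Walk.length_cons,
        SimpleGraph.Walk.length_cons]
      intro hlen e he
      have hr0 : r.length = 0 := by omega
      have hw'q : w'.length = q.length := by omega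
      rw [SimpleGraph.Walk.edges_append, SimpleGraph.Walk.edges_cons] at he
      have : r.edges = [] := by
        have : r.edges.length = 0 := by rw [r.length_edges, hr0]
        exact List.length_eq_zero_iff.mp this
      rw [this] at he
      rcases List.mem_cons.mp (by simpa using he) with rfl | he'
      · exact hSuv
      · exact hw'eq hw'q e he'

theorem stmt8 {V : Type*} [Fintype V] [DecidableEq V] (G : SimpleGraph V) [DecidableRel G.Adj]
    (hno4 : ∀ (v : V) (c : G.Walk v v), c.IsCycle → c.length ≤ 3)
    (m : ℕ) (hm : 2 ≤ m) (D : Fin m → Finset V)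
    (hdisj : ∀ j k, j ≠ k → Disjoint (D j) (D k))
    (hDconn : ∀ j, (G.induce ((D j) : Set V)).Connected)
    (S : Finset (Sym2 V)) (hS : S ⊆ G.edgeFinset)
    (hScross : ∀ e ∈ S, ∃ j k, j ≠ k ∧ ∃ x ∈ D j, ∃ y ∈ D k, e = s(x, y))
    (h3 : ∀ e₁ ∈ S, ∀ e₂ ∈ S, ∀ e₃ ∈ S, e₁ ≠ e₂ → e₁ ≠ e₃ → e₂ ≠ e₃ →
      4 ≤ (Finset.univ.filter (fun v : V => v ∈ e₁ ∨ v ∈ e₂ ∨ v ∈ e₃)).card)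
    (I : SimpleGraph (Fin m))
    (hI : I = SimpleGraph.fromRel (fun j k => ∃ e ∈ S, ∃ x ∈ D j, ∃ y ∈ D k, e = s(x, y)))
    (hcyc : ∃ (j : Fin m) (c : I.Walk j j), c.IsCycle) :
    False := by
  -- a helper: edges of S are edges of G
  have hSadj : ∀ {x y : V}, s(x, y) ∈ S → G.Adj x y := by
    intro x y hxy
    have := hS hxy
    rw [SimpleGraph.mem_edgeFinset, SimpleGraph.mem_edgeSet] at this
    exact this
  have hreal : ∀ i k, I.Adj i k → ∃ x ∈ D i, ∃ y ∈ D k, s(x, y) ∈ S ∧ G.Adj x y := by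
    intro i k hik
    rw [hI, SimpleGraph.fromRel_adj] at hik
    obtain ⟨hne, h1 | h1⟩ := hik
    · obtain ⟨e, heS, x, hxD, y, hyD, rfl⟩ := h1
      exact ⟨x, hxD, y, hyD, heS, hSadj heS⟩
    · obtain ⟨e, heS, x, hxD, y, hyD, rfl⟩ := h1
      refine ⟨y, hyD, x, hxD, ?_, ?_⟩
      · rwa [Sym2.eq_swap]
      · exact (hSadj heS).symm
  have hpth : ∀ i, ∀ x ∈ D i, ∀ u ∈ D i,
      ∃ r : G.Walk x u, r.IsPath ∧ ∀ v ∈ r.support, v ∈ D i :=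
    fun i x hx u hu => my_path_in (D i) (hDconn i) hx hu
  obtain ⟨j, c, hc⟩ := hcyc
  cases c with
  | nil => exact hc.ne_nil rfl
  | @cons _ b _ h q =>
    have hlen3 := hc.three_le_length
    rw [SimpleGraph.Walk.length_cons] at hlen3
    rw [SimpleGraph.Walk.cons_isCycle_iff] at hc
    obtain ⟨hqp, hjb⟩ := hc
    obtain ⟨xa, hxa, xb, hxb, he0, hadj0⟩ := hreal j b h
    obtain ⟨w, hwp, hws, hwlen, hweq⟩ := my_lift hdisj hreal hpth q hqp xb hxb xa hxa
    have hw2 : 2 ≤ w.length := by omega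
    have hWcyc : (SimpleGraph.Walk.cons hadj0 w).IsCycle := by
      rw [SimpleGraph.Walk.cons_isCycle_iff]
      exact ⟨hwp, my_end_edge hwp hw2⟩
    have hW3 := hno4 xa _ hWcyc
    rw [SimpleGraph.Walk.length_cons] at hW3
    have hwl2 : w.length = 2 := by omega
    have hql2 : w.length = q.length := by omega
    have hedgesS := hweq hql2
    -- destructure w of length 2
    cases w with
    | nil => simp at hwl2
    | @cons _ z _ h1 w1 =>
      cases w1 with
      | nil => simp at hwl2
      | @cons _ z2 _ h2 w2 =>
        cases w2 with
        | nil =>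
          -- w = xb - z - xa, edges s(xb,z), s(z,xa); with e0 = s(xa,xb)
          have he1 : s(xb, z) ∈ S := hedgesS _ (by simp)
          have he2 : s(z, xa) ∈ S := hedgesS _ (by simp)
          have hnd : ((SimpleGraph.Walk.cons hadj0
              (SimpleGraph.Walk.cons h1 (SimpleGraph.Walk.cons h2 SimpleGraph.Walk.nil)))).edges.Nodup :=
            hWcyc.edges_nodup
          simp only [SimpleGraph.Walk.edges_cons, SimpleGraph.Walk.edges_nil] at hnd
          obtain ⟨h01, hnd1⟩ := List.nodup_cons.mp hnd
          obtain ⟨h12, -⟩ := List.nodup_cons.mp hnd1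
          have hne01 : s(xa, xb) ≠ s(xb, z) := fun hh => h01 (by rw [hh]; simp)
          have hne02 : s(xa, xb) ≠ s(z, xa) := fun hh => h01 (by rw [hh]; simp)
          have hne12 : s(xb, z) ≠ s(z, xa) := fun hh => h12 (by rw [hh]; simp)
          have h4 := h3 (s(xa, xb)) he0 (s(xb, z)) he1 (s(z, xa)) he2 hne01 hne02 hne12
          have hsub : (Finset.univ.filter
              (fun v : V => v ∈ s(xa, xb) ∨ v ∈ s(xb, z) ∨ v ∈ s(z, xa))) ⊆ {xa, xb, z} := by
            intro v hvmem
            rw [Finset.mem_filter] at hvmem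
            rcases hvmem.2 with hv | hv | hv <;>
              rw [Sym2.mem_iff] at hv <;>
              rcases hv with rfl | rfl <;>
              simp
          have hle := Finset.card_le_card hsub
          have : ({xa, xb, z} : Finset V).card ≤ 3 := by
            apply le_trans (Finset.card_insert_le _ _)
            have := Finset.card_insert_le xb ({z} : Finset V)
            simp at this ⊢
            omega
          omega
        | cons h3' w3 =>
          simp only [SimpleGraph.Walk.length_cons] at hwl2
          omega
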